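/- Let s ≥ 2 and ω ∈ ℝ. The polynomial R_{s−1}(ω;t) = ∑_{k=0}^{s−1} r_k(ω) t^k has degree s−1 and s−1 pairwise distinct roots all of modulus 1 if and only if r_s(ω) = 0, i.e. if and only if ω ∈ Ω_s = {2cos(πα/(s+1)) : α = 1,…,s}. Moreover, for ω = −2cos φ_α with φ_α = πα/(s+1) and α ∈ {1,…,s}, the set of roots of R_{s−1}(ω;t) equals {t ∈ ℂ : t^{s+1} = (−1)^α} \ {e^{iφ_α}, e^{−iφ_α}}. -/

import Mathlib

/-- r_{-1} = 0, r_0 = 1, r_k(ω) = -ω r_{k-1}(ω) - r_{k-2}(ω); r_k(ω) = (-1)^k U_k(ω/2). -/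
def chebr : ℕ → ℝ → ℝ
  | 0 => fun _ => 1
  | 1 => fun ω => -ω
  | (k + 2) => fun ω => -ω * chebr (k + 1) ω - chebr k ω

/-- ℛ_{s-1}(ω;t) = ∑_{k=0}^{s-1} r_k(ω) t^k, as a complex polynomial in t. -/
noncomputable def Rpoly (s : ℕ) (ω : ℝ) : Polynomial ℂ :=
  ∑ k ∈ Finset.range s, Polynomial.C ((chebr k ω : ℝ) : ℂ) * Polynomial.X ^ k

open Polynomial

lemma chebr_step (k : ℕ) (ω : ℝ) : chebr (k+2) ω = -ω * chebr (k+1) ω - chebr k ω := rfl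

lemma chebr_mul_sin (φ : ℝ) : ∀ k : ℕ, chebr k (-2 * Real.cos φ) * Real.sin φ = Real.sin (((k:ℝ)+1)*φ) := by
  intro k
  induction k using Nat.twoStepInduction with
  | zero => simp [chebr]
  | one =>
    have : (((1:ℕ):ℝ)+1)*φ = 2*φ := by push_cast; ring
    rw [this, Real.sin_two_mul]
    simp [chebr]; ring
  | more n ih1 ih2 =>
    rw [chebr_step]
    have key : Real.sin ((((n+2:ℕ):ℝ)+1)*φ)
        = 2*Real.cos φ * Real.sin ((((n+1:ℕ):ℝ)+1)*φ) - Real.sin (((n:ℝ)+1)*φ) := by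
      have e1 : (((n+2:ℕ):ℝ)+1)*φ = ((((n+1:ℕ):ℝ)+1)*φ) + φ := by push_cast; ring
      have e2 : ((n:ℝ)+1)*φ = ((((n+1:ℕ):ℝ)+1)*φ) - φ := by push_cast; ring
      rw [e1, e2, Real.sin_add, Real.sin_sub]; ring
    rw [key, ← ih1, ← ih2]; ring


lemma Rpoly_ident (ω : ℝ) : ∀ n : ℕ,
    (X^2 + C (ω:ℂ) * X + 1) * Rpoly (n+1) ω
      = 1 - C ((chebr (n+1) ω : ℝ):ℂ) * X^(n+1) + C ((chebr n ω : ℝ):ℂ) * X^(n+2) := by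
  intro n
  induction n with
  | zero =>
    have h1 : chebr 1 ω = -ω := rfl
    have h0 : chebr 0 ω = 1 := rfl
    rw [Rpoly, Finset.sum_range_one, h0, h1, pow_zero, mul_one]
    push_cast
    simp only [map_one, map_neg]
    ring
  | succ n ih =>
    have hsum : Rpoly (n+2) ω = Rpoly (n+1) ω + C ((chebr (n+1) ω : ℝ):ℂ) * X^(n+1) := by
      simp [Rpoly, Finset.sum_range_succ]
    have hC : (C ((chebr (n+2) ω : ℝ):ℂ) : Polynomial ℂ)
        = -C (ω:ℂ) * C ((chebr (n+1) ω : ℝ):ℂ) - C ((chebr n ω : ℝ):ℂ) := by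
      rw [chebr_step]; push_cast; simp [map_sub, map_mul, map_neg]
    rw [hsum]
    calc (X^2 + C (ω:ℂ) * X + 1) * (Rpoly (n+1) ω + C ((chebr (n+1) ω : ℝ):ℂ) * X^(n+1))
        = (X^2 + C (ω:ℂ) * X + 1) * Rpoly (n+1) ω
          + C ((chebr (n+1) ω : ℝ):ℂ) * X^(n+1) * (X^2 + C (ω:ℂ) * X + 1) := by ring
      _ = _ := by rw [ih, hC]; ring

lemma Rpoly_coeff (s : ℕ) (ω : ℝ) (k : ℕ) :
    (Rpoly s ω).coeff k = if k < s then ((chebr k ω : ℝ) : ℂ) else 0 := by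
  rw [Rpoly, Polynomial.finset_sum_coeff]
  simp only [Polynomial.coeff_C_mul, Polynomial.coeff_X_pow]
  rw [Finset.sum_congr rfl (fun n _ => by rw [mul_ite, mul_one, mul_zero])]
  simp [Finset.sum_ite_eq, Finset.mem_range]

lemma Rpoly_ne_zero (s : ℕ) (hs : 0 < s) (ω : ℝ) : Rpoly s ω ≠ 0 := by
  intro h
  have := Rpoly_coeff s ω 0
  rw [h] at this
  simp [hs] at this
  have : chebr 0 ω = 1 := rfl
  simp_all

lemma Rpoly_natDegree (s : ℕ) (hs : 1 ≤ s) (ω : ℝ) (h : chebr (s-1) ω ≠ 0) :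
    (Rpoly s ω).natDegree = s - 1 := by
  apply le_antisymm
  · rw [Polynomial.natDegree_le_iff_coeff_eq_zero]
    intro m hm
    rw [Rpoly_coeff]
    have : ¬ m < s := by omega
    simp [this]
  · apply Polynomial.le_natDegree_of_ne_zero
    rw [Rpoly_coeff]
    have : s - 1 < s := by omega
    simp [this, h]

lemma Rpoly_eval_ident (ω : ℝ) (n : ℕ) (t : ℂ) :
    (t^2 + (ω:ℂ)*t + 1) * (Rpoly (n+1) ω).eval t
      = 1 - ((chebr (n+1) ω : ℝ):ℂ) * t^(n+1) + ((chebr n ω : ℝ):ℂ) * t^(n+2) := by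
  have := congrArg (Polynomial.eval t) (Rpoly_ident ω n)
  simpa using this

lemma factor_quad (φ : ℝ) :
    (X - C (Complex.exp (Complex.I * (φ:ℂ)))) * (X - C (Complex.exp (-Complex.I * (φ:ℂ))))
      = X^2 + C (((-2 * Real.cos φ : ℝ)):ℂ) * X + 1 := by
  set a := Complex.exp (Complex.I * (φ:ℂ)) with hadef
  set b := Complex.exp (-Complex.I * (φ:ℂ)) with hbdef
  have ha : a = Complex.cos φ + Complex.sin φ * Complex.I := by
    rw [hadef, mul_comm, Complex.exp_mul_I]
  have hb : b = Complex.cos φ - Complex.sin φ * Complex.I := by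
    rw [hbdef, show -Complex.I * (φ:ℂ) = ((-φ:ℂ))*Complex.I by ring, Complex.exp_mul_I,
      Complex.cos_neg, Complex.sin_neg]
    ring
  have hab : a * b = 1 := by
    rw [hadef, hbdef, ← Complex.exp_add]
    ring_nf
    exact Complex.exp_zero
  have hsum : a + b = ((2 * Real.cos φ : ℝ):ℂ) := by
    rw [ha, hb]; push_cast [Complex.ofReal_cos]; ring
  have h1 : (C a : Polynomial ℂ) * C b = 1 := by rw [← map_mul, hab, map_one]
  have h2 : (C a : Polynomial ℂ) + C b = C (((2 * Real.cos φ : ℝ):ℂ)) := by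
    rw [← map_add, hsum]
  have h3 : (C (((-2 * Real.cos φ : ℝ)):ℂ) : Polynomial ℂ)
      = -C (((2 * Real.cos φ : ℝ):ℂ)) := by
    rw [← map_neg]; norm_num
  rw [h3]
  linear_combination h1 - X * h2

lemma chebr_vals (m β : ℕ) (φ : ℝ) (hsin : Real.sin φ ≠ 0)
    (hφ : ((m:ℝ)+3) * φ = Real.pi * β) :
    chebr (m+2) (-2*Real.cos φ) = 0 ∧ chebr (m+1) (-2*Real.cos φ) = (-1)^(β+1) := by
  have h1 := chebr_mul_sin φ (m+2)
  have h2 := chebr_mul_sin φ (m+1)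
  constructor
  · have e : (((m+2:ℕ):ℝ)+1)*φ = (β:ℝ)*Real.pi := by push_cast; push_cast at hφ; linarith
    rw [e, Real.sin_nat_mul_pi] at h1
    exact (mul_eq_zero.mp h1).resolve_right hsin
  · have e : (((m+1:ℕ):ℝ)+1)*φ = (β:ℝ)*Real.pi - φ := by push_cast; push_cast at hφ; linarith
    rw [e, Real.sin_nat_mul_pi_sub] at h2
    have h3 : chebr (m+1) (-2*Real.cos φ) * Real.sin φ = (-1)^(β+1) * Real.sin φ := by
      rw [h2]; ring
    exact mul_right_cancel₀ hsin h3

lemma master (m β : ℕ) (φ : ℝ) (hφ0 : 0 < φ) (hφπ : φ < Real.pi)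
    (hφ : ((m:ℝ)+3) * φ = Real.pi * β) (ω : ℝ) (hω : ω = -2 * Real.cos φ)
    (a b : ℂ) (ha : a = Complex.exp (Complex.I * (φ:ℂ)))
    (hb : b = Complex.exp (-Complex.I * (φ:ℂ))) :
    chebr (m+2) ω = 0 ∧
    (Rpoly (m+2) ω).natDegree = m+1 ∧
    (Rpoly (m+2) ω).roots.Nodup ∧
    Multiset.card (Rpoly (m+2) ω).roots = m+1 ∧
    (∀ t ∈ (Rpoly (m+2) ω).roots, ‖t‖ = 1) ∧
    (∀ t : ℂ, (Rpoly (m+2) ω).eval t = 0 ↔ (t^(m+3) = (-1:ℂ)^β ∧ t ≠ a ∧ t ≠ b)) := by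
  subst hω ha hb
  have hsin : 0 < Real.sin φ := Real.sin_pos_of_pos_of_lt_pi hφ0 hφπ
  obtain ⟨hz, ho⟩ := chebr_vals m β φ hsin.ne' hφ
  have hone : chebr (m+2-1) (-2*Real.cos φ) ≠ 0 := by
    rw [show m+2-1 = m+1 from rfl, ho]
    exact pow_ne_zero _ (by norm_num)
  have hdeg : (Rpoly (m+2) (-2*Real.cos φ)).natDegree = m+1 :=
    Rpoly_natDegree (m+2) (by omega) _ hone
  have hR0 : Rpoly (m+2) (-2*Real.cos φ) ≠ 0 := Rpoly_ne_zero _ (by omega) _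
  set c : ℂ := (-1:ℂ)^β with hcdef
  have hc0 : c ≠ 0 := pow_ne_zero _ (by norm_num)
  have hee : ((-1:ℂ))^(β+1) * c = -1 := by
    rw [hcdef, ← pow_add]
    exact Odd.neg_one_pow ⟨β, by ring⟩
  have key : (X - C (Complex.exp (Complex.I * (φ:ℂ)))) * (X - C (Complex.exp (-Complex.I * (φ:ℂ))))
        * Rpoly (m+2) (-2*Real.cos φ)
      = C ((-1:ℂ)^(β+1)) * (X^(m+3) - C c) := by
    rw [factor_quad φ]
    have := Rpoly_ident (-2*Real.cos φ) (m+1)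
    rw [show m+1+1 = m+2 from rfl, hz, ho] at this
    rw [show m+1+2 = m+3 from rfl] at this
    rw [this]
    have hcast : (((((-1:ℝ))^(β+1)):ℝ):ℂ) = (-1:ℂ)^(β+1) := by push_cast; ring
    rw [hcast]
    rw [mul_sub, ← map_mul, hee]
    simp only [map_neg, map_one, Complex.ofReal_zero, map_zero, map_pow]
    ring
  have hq0 : (C ((-1:ℂ)^(β+1)) : Polynomial ℂ) * (X^(m+3) - C c) ≠ 0 :=
    mul_ne_zero (Polynomial.C_ne_zero.mpr (pow_ne_zero _ (by norm_num)))
      ((Polynomial.monic_X_pow_sub_C c (by omega)).ne_zero)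
  have hrootsq : ((X - C (Complex.exp (Complex.I * (φ:ℂ)))) * (X - C (Complex.exp (-Complex.I * (φ:ℂ))))
        * Rpoly (m+2) (-2*Real.cos φ)).roots = Polynomial.nthRoots (m+3) c := by
    rw [key, Polynomial.roots_C_mul _ (pow_ne_zero _ (by norm_num : (-1:ℂ) ≠ 0))]
    rfl
  have hlhs0 : (X - C (Complex.exp (Complex.I * (φ:ℂ)))) * (X - C (Complex.exp (-Complex.I * (φ:ℂ))))
        * Rpoly (m+2) (-2*Real.cos φ) ≠ 0 := by rw [key]; exact hq0
  have hN : Complex.exp (Complex.I * (φ:ℂ)) ::ₘ Complex.exp (-Complex.I * (φ:ℂ)) ::ₘ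
      (Rpoly (m+2) (-2*Real.cos φ)).roots = Polynomial.nthRoots (m+3) c := by
    rw [← hrootsq, Polynomial.roots_mul hlhs0,
      Polynomial.roots_mul (mul_ne_zero (X_sub_C_ne_zero _) (X_sub_C_ne_zero _)),
      Polynomial.roots_X_sub_C, Polynomial.roots_X_sub_C, add_assoc,
      Multiset.singleton_add, Multiset.singleton_add]
  have hnodupN : (Polynomial.nthRoots (m+3) c).Nodup :=
    Polynomial.nodup_roots (Polynomial.separable_X_pow_sub_C c
      (by exact_mod_cast (by omega : (m+3:ℕ) ≠ 0) : ((m+3:ℕ):ℂ) ≠ 0) hc0)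
  have hcardN : Multiset.card (Polynomial.nthRoots (m+3) c) = m+3 := by
    rw [Polynomial.nthRoots, Polynomial.splits_iff_card_roots.1 (IsAlgClosed.splits _),
      Polynomial.natDegree_X_pow_sub_C]
  have hnodup2 : (Complex.exp (Complex.I * (φ:ℂ)) ::ₘ Complex.exp (-Complex.I * (φ:ℂ)) ::ₘ
      (Rpoly (m+2) (-2*Real.cos φ)).roots).Nodup := hN ▸ hnodupN
  obtain ⟨hamem, hnodup3⟩ := Multiset.nodup_cons.mp hnodup2
  obtain ⟨hbmem, hnodupR⟩ := Multiset.nodup_cons.mp hnodup3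
  have hamem' : Complex.exp (Complex.I * (φ:ℂ)) ∉ (Rpoly (m+2) (-2*Real.cos φ)).roots :=
    fun h => hamem (Multiset.mem_cons_of_mem h)
  have hmemN : ∀ t : ℂ, t ∈ Polynomial.nthRoots (m+3) c ↔ t^(m+3) = c :=
    fun t => Polynomial.mem_nthRoots (by omega)
  have hcard : Multiset.card (Rpoly (m+2) (-2*Real.cos φ)).roots = m+1 := by
    have := congrArg Multiset.card hN
    simp only [Multiset.card_cons, hcardN] at this
    omega
  refine ⟨hz, hdeg, hnodupR, hcard, ?_, ?_⟩
  · intro t ht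
    have htN : t ∈ Polynomial.nthRoots (m+3) c := by
      rw [← hN]; exact Multiset.mem_cons_of_mem (Multiset.mem_cons_of_mem ht)
    have h1 : t^(m+3) = c := (hmemN t).mp htN
    have h2 : (‖t‖)^(m+3) = 1 := by
      rw [← norm_pow, h1, hcdef, norm_pow]
      simp
    rcases pow_eq_one_iff_cases.mp h2 with h3 | h3 | ⟨h3, _⟩
    · omega
    · exact h3
    · have := norm_nonneg t; linarith
  · intro t
    constructor
    · intro ht
      have htr : t ∈ (Rpoly (m+2) (-2*Real.cos φ)).roots :=
        (Polynomial.mem_roots hR0).mpr ht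
      refine ⟨(hmemN t).mp (by rw [← hN]; exact Multiset.mem_cons_of_mem (Multiset.mem_cons_of_mem htr)), ?_, ?_⟩
      · rintro rfl; exact hamem' htr
      · rintro rfl; exact hbmem htr
    · rintro ⟨h1, h2, h3⟩
      have : t ∈ Polynomial.nthRoots (m+3) c := (hmemN t).mpr h1
      rw [← hN, Multiset.mem_cons, Multiset.mem_cons] at this
      rcases this with h | h | h
      · exact absurd h h2
      · exact absurd h h3
      · exact (Polynomial.mem_roots hR0).mp h

lemma chebr_neg (ω : ℝ) : ∀ k, chebr k (-ω) = (-1)^k * chebr k ω := by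
  intro k
  induction k using Nat.twoStepInduction with
  | zero => simp [chebr]
  | one => simp [chebr]
  | more n ih1 ih2 =>
    rw [chebr_step, chebr_step, ih1, ih2]; ring

lemma chebr_lower (ω : ℝ) (hω : 2 ≤ ω) :
    ∀ k : ℕ, ((k:ℝ)+1) ≤ (-1)^k * chebr k ω ∧
      (-1)^k * chebr k ω + 1 ≤ (-1)^(k+1) * chebr (k+1) ω := by
  intro k
  induction k with
  | zero => constructor <;> simp [chebr] <;> nlinarith
  | succ n ih =>
    obtain ⟨h1, h2⟩ := ih
    have hpos : ((n:ℝ)+2) ≤ (-1)^(n+1) * chebr (n+1) ω := by linarith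
    constructor
    · push_cast; linarith
    · rw [chebr_step]
      have : (-1:ℝ)^(n+2) = (-1)^n := by ring
      rw [this]
      have h1' : (-1:ℝ)^n * (-ω * chebr (n + 1) ω - chebr n ω)
          = ω * ((-1)^(n+1) * chebr (n+1) ω) - (-1)^n * chebr n ω := by ring
      rw [h1']
      nlinarith

lemma chebr_ne_zero (ω : ℝ) (hω : 2 ≤ |ω|) (k : ℕ) : chebr k ω ≠ 0 := by
  rcases le_or_gt 0 ω with h | h
  · have h2 : 2 ≤ ω := by rcases abs_cases ω with ⟨he, _⟩ | ⟨he, _⟩ <;> linarith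
    have := (chebr_lower ω h2 k).1
    intro h0; rw [h0] at this; simp at this; nlinarith [this]
  · have h2 : 2 ≤ -ω := by rcases abs_cases ω with ⟨he, _⟩ | ⟨he, _⟩ <;> linarith
    have := (chebr_lower (-ω) h2 k).1
    have hneg : chebr k (-(-ω)) = (-1)^k * chebr k (-ω) := chebr_neg (-ω) k
    rw [neg_neg] at hneg
    intro h0
    rw [h0] at hneg
    have hk : chebr k (-ω) = 0 := by
      rcases Nat.even_or_odd k with he | he
      · rw [he.neg_one_pow] at hneg; linarith
      · rw [he.neg_one_pow] at hneg; linarith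
    rw [hk] at this; simp at this; nlinarith [this]

lemma flip_cos (M α β : ℕ) (hM : 0 < M) (hsum : α + β = M) :
    2 * Real.cos (Real.pi * α / M) = -2 * Real.cos (Real.pi * β / M) := by
  have hM' : (M:ℝ) ≠ 0 := Nat.cast_ne_zero.mpr hM.ne'
  have hα : (α:ℝ) = (M:ℝ) - β := by
    have : ((α + β : ℕ):ℝ) = ((M:ℕ):ℝ) := by rw [hsum]
    push_cast at this; linarith
  rw [hα]
  have : Real.pi * ((M:ℝ) - β) / M = Real.pi - Real.pi * β / M := by field_simp
  rw [this, Real.cos_pi_sub]; ring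

lemma part2 (m : ℕ) (ω : ℝ) :
    chebr (m+2) ω = 0 ↔
      ∃ α ∈ Finset.Icc 1 (m+2), ω = 2 * Real.cos (Real.pi * α / (((m+2:ℕ):ℝ) + 1)) := by
  have hden : ((m+2:ℕ):ℝ) + 1 = ((m+3:ℕ):ℝ) := by push_cast; ring
  have hM3 : ((m+3:ℕ):ℝ) ≠ 0 := by positivity
  constructor
  · intro h
    have habs : |ω| < 2 := by
      by_contra hc
      exact chebr_ne_zero ω (by linarith [not_lt.mp hc]) (m+2) h
    obtain ⟨hl, hr⟩ := abs_lt.mp habs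
    set φ := Real.arccos (-ω/2) with hφdef
    have hφ0 : 0 < φ := Real.arccos_pos.mpr (by linarith)
    have hcos : Real.cos φ = -ω/2 := Real.cos_arccos (by linarith) (by linarith)
    have hφπ : φ < Real.pi := by
      rcases lt_or_eq_of_le (Real.arccos_le_pi (-ω/2)) with h' | h'
      · exact h'
      · exfalso
        have hx : (-ω/2) = -1 := by rw [← hcos, hφdef, h', Real.cos_pi]
        linarith
    have hωφ : ω = -2 * Real.cos φ := by rw [hcos]; ring
    have hsin : 0 < Real.sin φ := Real.sin_pos_of_pos_of_lt_pi hφ0 hφπ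
    have h' := chebr_mul_sin φ (m+2)
    rw [← hωφ, h, zero_mul] at h'
    obtain ⟨n, hn⟩ := Real.sin_eq_zero_iff.mp h'.symm
    have hπ := Real.pi_pos
    have hcast : (((m+2:ℕ):ℝ)+1) = (m:ℝ)+3 := by push_cast; ring
    rw [hcast] at hn
    have hn0 : 0 < n := by
      by_contra hc
      push_neg at hc
      have : (n:ℝ) * Real.pi ≤ 0 := mul_nonpos_of_nonpos_of_nonneg (by exact_mod_cast hc) hπ.le
      nlinarith
    have hnm : n < m+3 := by
      by_contra hc
      push_neg at hc
      have h1 : ((m:ℝ)+3) * Real.pi ≤ (n:ℝ) * Real.pi := by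
        have : ((m:ℝ)+3) ≤ (n:ℝ) := by exact_mod_cast hc
        nlinarith
      nlinarith
    set nn := n.toNat with hnndef
    have hnncast : ((nn:ℕ):ℝ) = (n:ℝ) := by
      rw [hnndef]; exact_mod_cast congrArg Int.cast (Int.toNat_of_nonneg hn0.le)
    have hnn1 : 1 ≤ nn := by omega
    have hnnm : nn ≤ m+2 := by omega
    refine ⟨(m+3) - nn, by simp [Finset.mem_Icc]; omega, ?_⟩
    rw [hden, flip_cos (m+3) ((m+3)-nn) nn (by omega) (by omega), hωφ]
    have hφval : φ = Real.pi * nn / ((m+3:ℕ):ℝ) := by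
      rw [hnncast]
      push_cast
      field_simp
      linarith [hn]
    rw [hφval]
  · rintro ⟨α, hα, hω⟩
    rw [Finset.mem_Icc] at hα
    rw [hden, flip_cos (m+3) α ((m+3)-α) (by omega) (by omega)] at hω
    set β := (m+3) - α with hβdef
    set φ := Real.pi * β / ((m+3:ℕ):ℝ) with hφdef
    have hβ1 : 1 ≤ β := by omega
    have hβm : β ≤ m+2 := by omega
    have hπ := Real.pi_pos
    have hφ0 : 0 < φ := by
      rw [hφdef]
      have : (0:ℝ) < (β:ℝ) := by exact_mod_cast hβ1
      positivity
    have hφπ : φ < Real.pi := by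
      rw [hφdef, div_lt_iff₀ (by positivity)]
      have : (β:ℝ) < ((m+3:ℕ):ℝ) := by exact_mod_cast (by omega : β < m+3)
      nlinarith
    have hφeq : ((m:ℝ)+3) * φ = Real.pi * β := by
      rw [hφdef]
      have : ((m+3:ℕ):ℝ) = (m:ℝ)+3 := by push_cast; ring
      rw [this]
      field_simp
    have hsin : 0 < Real.sin φ := Real.sin_pos_of_pos_of_lt_pi hφ0 hφπ
    rw [hω]
    exact (chebr_vals m β φ hsin.ne' hφeq).1

lemma root_eq (m : ℕ) (ω : ℝ) (t : ℂ) (ht : (Rpoly (m+2) ω).eval t = 0)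
    (habs : ‖t‖ = 1) (hv2 : chebr (m+1) ω ^ 2 = 1) :
    chebr (m+2) ω * (chebr (m+2) ω - 2 * chebr (m+1) ω * t.re) = 0 := by
  have hkey := Rpoly_eval_ident ω (m+1) t
  rw [show m+1+1 = m+2 from rfl, show m+1+2 = m+3 from rfl, ht, mul_zero] at hkey
  set u := chebr (m+2) ω with hu
  set v := chebr (m+1) ω with hv
  have h1 : t^(m+2) * (((u:ℝ):ℂ) - ((v:ℝ):ℂ) * t) = 1 := by
    linear_combination hkey
  have h2 : ‖((u:ℝ):ℂ) - ((v:ℝ):ℂ) * t‖ = 1 := by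
    have := congrArg norm h1
    rw [norm_mul, norm_pow, habs, one_pow, one_mul, norm_one] at this
    exact this
  have h3 : Complex.normSq (((u:ℝ):ℂ) - ((v:ℝ):ℂ) * t) = 1 := by
    rw [← Complex.sq_norm, h2]; norm_num
  have h4 : Complex.normSq t = 1 := by
    rw [← Complex.sq_norm, habs]; norm_num
  rw [Complex.normSq_apply] at h3 h4
  simp only [Complex.sub_re, Complex.sub_im, Complex.mul_re, Complex.mul_im,
    Complex.ofReal_re, Complex.ofReal_im] at h3
  linear_combination h3 - v^2*h4 - hv2

lemma part1_fwd (m : ℕ) (ω : ℝ)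
    (hdeg : (Rpoly (m+2) ω).natDegree = m+1)
    (hnodup : (Rpoly (m+2) ω).roots.Nodup)
    (hcard : Multiset.card (Rpoly (m+2) ω).roots = m+1)
    (habs : ∀ t ∈ (Rpoly (m+2) ω).roots, ‖t‖ = 1) :
    chebr (m+2) ω = 0 := by
  have hR0 : Rpoly (m+2) ω ≠ 0 := Rpoly_ne_zero _ (by omega) _
  have hcoeff : (Rpoly (m+2) ω).coeff (m+1) = ((chebr (m+1) ω :ℝ):ℂ) := by
    rw [Rpoly_coeff]; simp
  have hlead : (Rpoly (m+2) ω).leadingCoeff = ((chebr (m+1) ω :ℝ):ℂ) := by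
    rw [Polynomial.leadingCoeff, hdeg, hcoeff]
  have hv0 : ((chebr (m+1) ω :ℝ):ℂ) ≠ 0 := by
    rw [← hlead]; exact Polynomial.leadingCoeff_ne_zero.mpr hR0
  have hv0' : chebr (m+1) ω ≠ 0 := by exact_mod_cast hv0
  have hsplit : (Rpoly (m+2) ω).Splits := IsAlgClosed.splits _
  have hprod := hsplit.eq_prod_roots
  have heval0 : (Rpoly (m+2) ω).eval 0 = 1 := by
    rw [← Polynomial.coeff_zero_eq_eval_zero, Rpoly_coeff]
    simp [show chebr 0 ω = 1 from rfl]
  -- |v| = 1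
  have hv2 : chebr (m+1) ω ^ 2 = 1 := by
    have h1 : (1:ℂ) = ((chebr (m+1) ω :ℝ):ℂ)
        * (((Rpoly (m+2) ω).roots.map (fun t => (0:ℂ) - t)).prod) := by
      conv_lhs => rw [← heval0, hprod]
      rw [hlead, Polynomial.eval_mul, Polynomial.eval_C, Polynomial.eval_multiset_prod,
        Multiset.map_map]
      simp
    have h2 := congrArg norm h1
    rw [norm_one, norm_mul, show ∀ l : Multiset ℂ, ‖l.prod‖ = (l.map norm).prod from
      fun l => map_multiset_prod (normHom : ℂ →*₀ ℝ) l, Multiset.map_map] at h2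
    have h3 : (((Rpoly (m+2) ω).roots.map (norm ∘ fun t => (0:ℂ) - t)).prod) = 1 := by
      apply Multiset.prod_eq_one
      intro x hx
      simp only [Multiset.mem_map, Function.comp_apply] at hx
      obtain ⟨t, ht, rfl⟩ := hx
      simp [habs t ht]
    rw [h3, mul_one, Complex.norm_real] at h2
    have : |chebr (m+1) ω| = 1 := h2.symm
    nlinarith [abs_nonneg (chebr (m+1) ω), sq_abs (chebr (m+1) ω)]
  match m with
  | 0 =>
    have e1 : chebr 1 ω = -ω := rfl
    have e2 : chebr 2 ω = -ω * chebr 1 ω - chebr 0 ω := rfl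
    have e0 : chebr 0 ω = 1 := rfl
    rw [e2, e1, e0]
    rw [e1] at hv2
    nlinarith
  | 1 =>
    have e1 : chebr 1 ω = -ω := rfl
    have e2 : chebr 2 ω = -ω * chebr 1 ω - chebr 0 ω := rfl
    have e3 : chebr 3 ω = -ω * chebr 2 ω - chebr 1 ω := rfl
    have e0 : chebr 0 ω = 1 := rfl
    have hc2 : chebr 2 ω = ω^2 - 1 := by rw [e2, e1, e0]; ring
    rw [hc2] at hv2
    have hsq : (2*ω - ω^3)^2 = 0 := by nlinarith
    have hz : 2*ω - ω^3 = 0 := by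
      have := sq_eq_zero_iff.mp hsq; linarith
    rw [e3, hc2, e1]; linarith
  | (m'+2) =>
    by_contra hu
    have hre : ∀ t ∈ (Rpoly (m'+2+2) ω).roots,
        2 * chebr (m'+2+1) ω * t.re = chebr (m'+2+2) ω := by
      intro t ht
      have heval : (Rpoly (m'+2+2) ω).eval t = 0 := (Polynomial.mem_roots hR0).mp ht
      have := root_eq (m'+2) ω t heval (habs t ht) hv2
      rcases mul_eq_zero.mp this with h | h
      · exact absurd h hu
      · linarith
    have hfc : (Rpoly (m'+2+2) ω).roots.toFinset.card = m'+3 := by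
      rw [Multiset.toFinset_card_of_nodup hnodup, hcard]
    have h3 : 2 < (Rpoly (m'+2+2) ω).roots.toFinset.card := by omega
    obtain ⟨t1, t2, t3, ht1, ht2, ht3, h12, h13, h23⟩ := Finset.two_lt_card_iff.mp h3
    rw [Multiset.mem_toFinset] at ht1 ht2 ht3
    have hv0'' : 2 * chebr (m'+2+1) ω ≠ 0 := by
      intro h; apply hv0'; linarith
    have hre12 : t1.re = t2.re := by
      have := (hre t1 ht1).trans (hre t2 ht2).symm
      exact mul_left_cancel₀ hv0'' this
    have hre13 : t1.re = t3.re := by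
      have := (hre t1 ht1).trans (hre t3 ht3).symm
      exact mul_left_cancel₀ hv0'' this
    have hns : ∀ t ∈ (Rpoly (m'+2+2) ω).roots, t.re^2 + t.im^2 = 1 := by
      intro t ht
      have h4 : Complex.normSq t = 1 := by
        rw [← Complex.sq_norm, habs t ht]; norm_num
      rw [Complex.normSq_apply] at h4
      nlinarith [h4]
    have him12 : t2.im = -t1.im ∨ t2.im = t1.im := by
      have := (hns t1 ht1).trans (hns t2 ht2).symm
      rw [hre12] at this
      have h5 : (t2.im - t1.im) * (t2.im + t1.im) = 0 := by nlinarith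
      rcases mul_eq_zero.mp h5 with h | h
      · right; linarith
      · left; linarith
    have him12' : t2.im = -t1.im := by
      rcases him12 with h | h
      · exact h
      · exfalso; exact h12 (Complex.ext hre12 h.symm)
    have him13' : t3.im = -t1.im := by
      have := (hns t1 ht1).trans (hns t3 ht3).symm
      rw [hre13] at this
      have h5 : (t3.im - t1.im) * (t3.im + t1.im) = 0 := by nlinarith
      rcases mul_eq_zero.mp h5 with h | h
      · exfalso
        have : t3.im = t1.im := by linarith
        exact h13 (Complex.ext hre13 this.symm)
      · linarith
    exact h23 (Complex.ext (hre12.symm.trans hre13) (him12'.trans him13'.symm))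

/-- ℛ_{s-1}(ω;·) has degree s-1 and s-1 pairwise distinct roots on the unit
circle iff r_s(ω) = 0, iff ω ∈ Ω_s; and for ω = -2cos(πα/(s+1)) its root set is
{t : t^{s+1} = (-1)^α} minus {e^{iφ_α}, e^{-iφ_α}}. -/
theorem stmt9 (s : ℕ) (hs : 2 ≤ s) (ω : ℝ) :
    (((Rpoly s ω).natDegree = s - 1 ∧ (Rpoly s ω).roots.Nodup ∧
        Multiset.card (Rpoly s ω).roots = s - 1 ∧
        ∀ t ∈ (Rpoly s ω).roots, ‖t‖ = 1)
      ↔ chebr s ω = 0)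
    ∧ (chebr s ω = 0 ↔ ∃ α ∈ Finset.Icc 1 s, ω = 2 * Real.cos (Real.pi * α / (s + 1)))
    ∧ ∀ α ∈ Finset.Icc 1 s,
        {t : ℂ | (Rpoly s (-2 * Real.cos (Real.pi * α / (s + 1)))).eval t = 0}
          = {t : ℂ | t ^ (s + 1) = (-1) ^ α} \
              {Complex.exp (Complex.I * ((Real.pi * α / (s + 1) : ℝ) : ℂ)),
               Complex.exp (-Complex.I * ((Real.pi * α / (s + 1) : ℝ) : ℂ))} := by
  obtain ⟨m, rfl⟩ : ∃ m, s = m + 2 := ⟨s - 2, by omega⟩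
  have hπ := Real.pi_pos
  have hden : (((m+2:ℕ):ℝ) + 1) = ((m:ℝ)+3) := by push_cast; ring
  have hsub : m + 2 - 1 = m + 1 := rfl
  refine ⟨⟨?_, ?_⟩, part2 m ω, ?_⟩
  · rintro ⟨h1, h2, h3, h4⟩
    rw [hsub] at h1 h3
    exact part1_fwd m ω h1 h2 h3 h4
  · intro h
    obtain ⟨α, hα, hω⟩ := (part2 m ω).mp h
    rw [Finset.mem_Icc] at hα
    rw [show (((m+2:ℕ):ℝ) + 1) = ((m+3:ℕ):ℝ) by push_cast; ring] at hω
    rw [flip_cos (m+3) α ((m+3)-α) (by omega) (by omega)] at hω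
    set β := (m+3) - α with hβdef
    have hβ1 : 1 ≤ β := by omega
    have hβm : β ≤ m+2 := by omega
    set φ := Real.pi * (β:ℝ) / (((m+3:ℕ):ℝ)) with hφdef
    have hden3 : ((m+3:ℕ):ℝ) = ((m:ℝ)+3) := by push_cast; ring
    have hβ0 : (0:ℝ) < β := by exact_mod_cast hβ1
    have hφ0 : 0 < φ := by rw [hφdef, hden3]; positivity
    have hφπ : φ < Real.pi := by
      rw [hφdef, hden3, div_lt_iff₀ (by positivity)]
      have : (β:ℝ) ≤ (m:ℝ)+2 := by exact_mod_cast hβm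
      nlinarith
    have hφeq : ((m:ℝ)+3) * φ = Real.pi * β := by
      rw [hφdef, hden3]; field_simp
    have hωeq : ω = -2 * Real.cos φ := by rw [hω, hφdef, hden3]
    obtain ⟨-, hdeg, hnodup, hcard, habs, -⟩ :=
      master m β φ hφ0 hφπ hφeq ω hωeq _ _ rfl rfl
    exact ⟨by rw [hsub, hdeg], hnodup, by rw [hsub, hcard], habs⟩
  · intro α hα
    rw [Finset.mem_Icc] at hα
    set φ := Real.pi * (α:ℝ) / (((m+2:ℕ):ℝ) + 1) with hφdef
    have hα0 : (0:ℝ) < α := by exact_mod_cast hα.1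
    have hφ0 : 0 < φ := by rw [hφdef, hden]; positivity
    have hφπ : φ < Real.pi := by
      rw [hφdef, hden, div_lt_iff₀ (by positivity)]
      have : (α:ℝ) ≤ (m:ℝ)+2 := by exact_mod_cast hα.2
      nlinarith
    have hφeq : ((m:ℝ)+3) * φ = Real.pi * α := by
      rw [hφdef, hden]; field_simp
    obtain ⟨-, -, -, -, -, hiff⟩ :=
      master m α φ hφ0 hφπ hφeq (-2 * Real.cos φ) rfl _ _ rfl rfl
    ext t
    simp only [Set.mem_setOf_eq, Set.mem_diff, Set.mem_insert_iff, Set.mem_singleton_iff]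
    rw [hiff t, show m+2+1 = m+3 from rfl]
    tauto
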